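/- Let (Z_k) be a martingale with respect to a filtration (F_k), with predictable processes (A_k), (B_k) and constants (c_k) such that A_k ≤ Z_k − Z_{k−1} ≤ B_k and B_k − A_k ≤ c_k almost surely. Then for all ε > 0, P[Z_t − Z₀ ≥ ε] ≤ exp(−2ε²/∑_{i=1}^t c_i²). -/

import Mathlib

open MeasureTheory Real


/-- Auxiliary: H(x) = (x/4+p) exp(x²/8+(p-1)x) - p is nonneg on [0,∞). -/
lemma aux_H_nonneg (p : ℝ) (x : ℝ) (hx : 0 ≤ x) :
    0 ≤ (x/4 + p) * Real.exp (x^2/8 + (p-1)*x) - p := by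
  set H : ℝ → ℝ := fun x => (x/4 + p) * Real.exp (x^2/8 + (p-1)*x) - p with hH
  have hderiv : ∀ y : ℝ, HasDerivAt H (Real.exp (y^2/8 + (p-1)*y) * (y/4 + p - 1/2)^2) y := by
    intro y
    have hE : HasDerivAt (fun y : ℝ => y^2/8 + (p-1)*y) (y/4 + (p-1)) y := by
      have h1 : HasDerivAt (fun y : ℝ => y^2/8) (2*y/8) y :=
        (hasDerivAt_pow 2 y).div_const 8 |>.congr_deriv (by ring)
      have h2 : HasDerivAt (fun y : ℝ => (p-1)*y) (p-1) y :=
        (hasDerivAt_id y).const_mul (p-1) |>.congr_deriv (by ring)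
      exact (h1.add h2).congr_deriv (by ring)
    have hexp : HasDerivAt (fun y : ℝ => Real.exp (y^2/8 + (p-1)*y))
        (Real.exp (y^2/8 + (p-1)*y) * (y/4 + (p-1))) y := (Real.hasDerivAt_exp _).comp y hE
    have hlin : HasDerivAt (fun y : ℝ => y/4 + p) (1/4) y := by
      have := (hasDerivAt_id y).div_const 4
      simpa using this.add_const p
    have := (hlin.mul hexp).sub_const p
    refine this.congr_deriv ?_
    ring
  have hmono : MonotoneOn H (Set.Ici 0) := by
    refine monotoneOn_of_deriv_nonneg (convex_Ici 0) ?_ ?_ ?_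
    · exact Continuous.continuousOn (by fun_prop)
    · intro y _; exact (hderiv y).differentiableAt.differentiableWithinAt
    · intro y _; rw [(hderiv y).deriv]; positivity
  have h0 : H 0 = 0 := by simp [hH]
  have := hmono (Set.self_mem_Ici) hx hx
  rw [h0] at this
  exact this

/-- (1-p)e^{-ph} + p e^{(1-p)h} ≤ e^{h²/8} for p ∈ [0,1], h ≥ 0. -/
lemma hoeffding_fun_bound (p h : ℝ) (hh : 0 ≤ h) :
    (1-p) * Real.exp (-(p*h)) + p * Real.exp ((1-p)*h) ≤ Real.exp (h^2/8) := by
  set F : ℝ → ℝ := fun x => Real.exp (x^2/8 + p*x) - p * Real.exp x - (1-p) with hF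
  have hderiv : ∀ y : ℝ, HasDerivAt F
      (Real.exp y * ((y/4 + p) * Real.exp (y^2/8 + (p-1)*y) - p)) y := by
    intro y
    have hE : HasDerivAt (fun y : ℝ => y^2/8 + p*y) (y/4 + p) y := by
      have h1 : HasDerivAt (fun y : ℝ => y^2/8) (2*y/8) y :=
        (hasDerivAt_pow 2 y).div_const 8 |>.congr_deriv (by ring)
      have h2 : HasDerivAt (fun y : ℝ => p*y) p y :=
        (hasDerivAt_id y).const_mul p |>.congr_deriv (by ring)
      exact (h1.add h2).congr_deriv (by ring)
    have hexp : HasDerivAt (fun y : ℝ => Real.exp (y^2/8 + p*y))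
        (Real.exp (y^2/8 + p*y) * (y/4 + p)) y := (Real.hasDerivAt_exp _).comp y hE
    have h3 : HasDerivAt (fun y : ℝ => p * Real.exp y) (p * Real.exp y) y :=
      (Real.hasDerivAt_exp y).const_mul p
    have := (hexp.sub h3).sub_const (1-p)
    refine this.congr_deriv ?_
    have hsplit : Real.exp (y^2/8 + p*y) = Real.exp y * Real.exp (y^2/8 + (p-1)*y) := by
      rw [← Real.exp_add]; ring_nf
    rw [hsplit]; ring
  have hmono : MonotoneOn F (Set.Ici 0) := by
    refine monotoneOn_of_deriv_nonneg (convex_Ici 0) (Continuous.continuousOn (by fun_prop))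
      (fun y _ => (hderiv y).differentiableAt.differentiableWithinAt) ?_
    intro y hy
    rw [(hderiv y).deriv]
    have := aux_H_nonneg p y (le_of_lt (by simpa using hy))
    positivity
  have h0 : F 0 = 0 := by simp [hF]
  have hFh : 0 ≤ F h := by
    have := hmono Set.self_mem_Ici hh hh
    rwa [h0] at this
  have key : p * Real.exp h + (1-p) ≤ Real.exp (h^2/8 + p*h) := by
    simp only [hF] at hFh; linarith
  have hpos : (0:ℝ) < Real.exp (-(p*h)) := Real.exp_pos _
  calc (1-p) * Real.exp (-(p*h)) + p * Real.exp ((1-p)*h)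
      = (p * Real.exp h + (1-p)) * Real.exp (-(p*h)) := by
        rw [add_mul, mul_assoc, ← Real.exp_add]; ring_nf
    _ ≤ Real.exp (h^2/8 + p*h) * Real.exp (-(p*h)) := by
        exact mul_le_mul_of_nonneg_right key hpos.le
    _ = Real.exp (h^2/8) := by rw [← Real.exp_add]; ring_nf

lemma exp_affine_bound (s a b c x : ℝ) (hs : 0 ≤ s) (ha : a ≤ 0) (hb : 0 ≤ b)
    (hax : a ≤ x) (hxb : x ≤ b) (hc : b - a ≤ c) :
    Real.exp (s*x) ≤ Real.exp (s^2*c^2/8)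
      + ((Real.exp (s*b) - Real.exp (s*a))/(b-a)) * x := by
  have hc0 : 0 ≤ c := le_trans (by linarith) hc
  have hK : (1:ℝ) ≤ Real.exp (s^2*c^2/8) := by
    rw [← Real.exp_zero]; apply Real.exp_le_exp.2; positivity
  rcases eq_or_lt_of_le (hax.trans hxb : a ≤ b) with heq | hab
  · have hx0 : x = 0 := le_antisymm (by linarith [heq ▸ hxb]) (by linarith [heq ▸ hax])
    rw [hx0]; simpa using hK
  · have hba : 0 < b - a := by linarith
    set p : ℝ := -a/(b-a) with hp
    have hp0 : 0 ≤ p := div_nonneg (by linarith) hba.le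
    have hp1 : p ≤ 1 := by rw [hp, div_le_one hba]; linarith
    set h : ℝ := s*(b-a) with hh
    have hh0 : 0 ≤ h := by positivity
    have hchord : Real.exp (s*x) ≤
        ((b-x)/(b-a)) * Real.exp (s*a) + ((x-a)/(b-a)) * Real.exp (s*b) := by
      have := convexOn_exp.2 (Set.mem_univ (s*a)) (Set.mem_univ (s*b))
        (show (0:ℝ) ≤ (b-x)/(b-a) from div_nonneg (by linarith) hba.le)
        (show (0:ℝ) ≤ (x-a)/(b-a) from div_nonneg (by linarith) hba.le)
        (show (b-x)/(b-a) + (x-a)/(b-a) = 1 by field_simp; ring)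
      simp only [smul_eq_mul] at this
      have harg : (b-x)/(b-a) * (s*a) + (x-a)/(b-a) * (s*b) = s*x := by
        field_simp; ring
      rwa [harg] at this
    have hsplit : ((b-x)/(b-a)) * Real.exp (s*a) + ((x-a)/(b-a)) * Real.exp (s*b)
        = (b * Real.exp (s*a) - a * Real.exp (s*b))/(b-a)
          + ((Real.exp (s*b) - Real.exp (s*a))/(b-a)) * x := by
      field_simp; ring
    have hI : (b * Real.exp (s*a) - a * Real.exp (s*b))/(b-a) ≤ Real.exp (s^2*c^2/8) := by
      have hsa : s*a = -(p*h) := by rw [hp, hh]; field_simp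
      have hsb : s*b = (1-p)*h := by
        rw [hp, hh]; field_simp; ring
      have hrw : (b * Real.exp (s*a) - a * Real.exp (s*b))/(b-a)
          = (1-p) * Real.exp (-(p*h)) + p * Real.exp ((1-p)*h) := by
        rw [hsa, hsb, hp]
        field_simp
        ring
      rw [hrw]
      refine (hoeffding_fun_bound p h hh0).trans (Real.exp_le_exp.2 ?_)
      rw [hh]
      have h1 : (b-a)^2 ≤ c^2 := by nlinarith
      have h2 : (s*(b-a))^2 = s^2*(b-a)^2 := by ring
      rw [h2]
      have := mul_le_mul_of_nonneg_left h1 (sq_nonneg s)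
      linarith
    calc Real.exp (s*x) ≤ _ := hchord
      _ = _ := hsplit
      _ ≤ _ := by gcongr

lemma azuma_mgf_induction
    {Ω : Type*} {m0 : MeasurableSpace Ω} (μ : Measure Ω) [IsProbabilityMeasure μ]
    (ℱ : Filtration ℕ m0) (Z A B : ℕ → Ω → ℝ) (c : ℕ → ℝ)
    (hmart : Martingale Z ℱ μ)
    (hpred : ∀ k : ℕ, 1 ≤ k →
      Measurable[ℱ (k - 1)] (A k) ∧ Measurable[ℱ (k - 1)] (B k))
    (hbdd : ∀ k : ℕ, 1 ≤ k → ∀ᵐ ω ∂μ,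
      A k ω ≤ Z k ω - Z (k - 1) ω ∧ Z k ω - Z (k - 1) ω ≤ B k ω ∧ B k ω - A k ω ≤ c k) :
    ∀ n : ℕ, (∀ᵐ ω ∂μ, |Z n ω - Z 0 ω| ≤ ∑ i ∈ Finset.Icc 1 n, c i) ∧
      ∀ s : ℝ, 0 ≤ s → ∫ ω, Real.exp (s * (Z n ω - Z 0 ω)) ∂μ ≤
        Real.exp (s^2 * (∑ i ∈ Finset.Icc 1 n, c i ^ 2) / 8) := by
  intro n
  induction n with
  | zero =>
    constructor
    · filter_upwards with ω; simp
    · intro s hs; simp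
  | succ n ih =>
    obtain ⟨ihbd, ihmgf⟩ := ih
    have hZint : ∀ m, Integrable (Z m) μ := fun m => hmart.integrable m
    set D : Ω → ℝ := fun ω => Z (n+1) ω - Z n ω with hD
    have hDint : Integrable D μ := (hZint (n+1)).sub (hZint n)
    have hb : ∀ᵐ ω ∂μ, A (n+1) ω ≤ D ω ∧ D ω ≤ B (n+1) ω ∧
        B (n+1) ω - A (n+1) ω ≤ c (n+1) := by
      have := hbdd (n+1) (Nat.le_add_left 1 n)
      simpa [Nat.add_sub_cancel, hD] using this
    obtain ⟨hAmeas, hBmeas⟩ := hpred (n+1) (Nat.le_add_left 1 n)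
    rw [Nat.add_sub_cancel] at hAmeas hBmeas
    -- conditional expectation of D is 0
    have hcondD : μ[D | ℱ n] =ᵐ[μ] 0 := by
      have h1 : μ[Z (n+1) | ℱ n] =ᵐ[μ] Z n := hmart.condExp_ae_eq (Nat.le_succ n)
      have h2 : μ[Z n | ℱ n] = Z n :=
        condExp_of_stronglyMeasurable (ℱ.le n) (hmart.stronglyAdapted n) (hZint n)
      have h3 : μ[D | ℱ n] =ᵐ[μ] μ[Z (n+1) | ℱ n] - μ[Z n | ℱ n] := by
        have := condExp_sub (m := ℱ n) (hZint (n+1)) (hZint n) (μ := μ)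
        exact this
      refine h3.trans ?_
      rw [h2]
      filter_upwards [h1] with ω h1ω
      simp [h1ω]
    -- integrability of A, B
    have hAint : Integrable (A (n+1)) μ := by
      refine Integrable.mono' (g := fun ω => |D ω| + |c (n+1)|)
        (hDint.abs.add (integrable_const _))
        ((hAmeas.mono (ℱ.le n) le_rfl).aestronglyMeasurable) ?_
      filter_upwards [hb] with ω ⟨h1, h2, h3⟩
      rw [Real.norm_eq_abs, abs_le]
      constructor
      · have : D ω - c (n+1) ≤ A (n+1) ω := by linarith
        have h4 : -|D ω| ≤ D ω := neg_abs_le _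
        have h5 : -|c (n+1)| ≤ -c (n+1) := by
          simp only [neg_le_neg_iff]; exact le_abs_self _
        linarith
      · have h4 : D ω ≤ |D ω| := le_abs_self _
        have h5 : (0:ℝ) ≤ |c (n+1)| := abs_nonneg _
        linarith
    have hBint : Integrable (B (n+1)) μ := by
      refine Integrable.mono' (g := fun ω => |D ω| + |c (n+1)|)
        (hDint.abs.add (integrable_const _))
        ((hBmeas.mono (ℱ.le n) le_rfl).aestronglyMeasurable) ?_
      filter_upwards [hb] with ω ⟨h1, h2, h3⟩
      rw [Real.norm_eq_abs, abs_le]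
      constructor
      · have h4 : -|D ω| ≤ D ω := neg_abs_le _
        have h5 : (0:ℝ) ≤ |c (n+1)| := abs_nonneg _
        linarith
      · have : B (n+1) ω ≤ D ω + c (n+1) := by linarith
        have h4 : D ω ≤ |D ω| := le_abs_self _
        have h5 : c (n+1) ≤ |c (n+1)| := le_abs_self _
        linarith
    -- A ≤ 0 ≤ B a.e.
    have hA0 : A (n+1) ≤ᵐ[μ] 0 := by
      have hmono := condExp_mono (m := ℱ n) (μ := μ) hAint hDint
        (by filter_upwards [hb] with ω hω; exact hω.1)
      have heqA : μ[A (n+1) | ℱ n] = A (n+1) :=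
        condExp_of_stronglyMeasurable (ℱ.le n) hAmeas.stronglyMeasurable hAint
      rw [heqA] at hmono
      exact hmono.trans hcondD.le
    have hB0 : (0 : Ω → ℝ) ≤ᵐ[μ] B (n+1) := by
      have hmono := condExp_mono (m := ℱ n) (μ := μ) hDint hBint
        (by filter_upwards [hb] with ω hω; exact hω.2.1)
      have heqB : μ[B (n+1) | ℱ n] = B (n+1) :=
        condExp_of_stronglyMeasurable (ℱ.le n) hBmeas.stronglyMeasurable hBint
      rw [heqB] at hmono
      exact hcondD.symm.le.trans hmono
    have hc0 : 0 ≤ c (n+1) := by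
      obtain ⟨ω, ⟨⟨ha, hab, hac⟩, hA⟩, hB⟩ := ((hb.and hA0).and hB0).exists
      have : (0:ℝ) ≤ B (n+1) ω - A (n+1) ω := by
        simp only [Pi.zero_apply] at hA hB; linarith
      linarith
    -- a.e. |D| ≤ c (n+1)
    have hDb : ∀ᵐ ω ∂μ, |D ω| ≤ c (n+1) := by
      filter_upwards [hb, hA0, hB0] with ω ⟨h1, h2, h3⟩ hA hB
      simp only [Pi.zero_apply] at hA hB
      rw [abs_le]; constructor <;> linarith
    -- part 1 of the conclusion
    have hpart1 : ∀ᵐ ω ∂μ, |Z (n+1) ω - Z 0 ω| ≤ ∑ i ∈ Finset.Icc 1 (n+1), c i := by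
      filter_upwards [ihbd, hDb] with ω h1 h2
      rw [Finset.sum_Icc_succ_top (Nat.le_add_left 1 n)]
      calc |Z (n+1) ω - Z 0 ω| = |(Z n ω - Z 0 ω) + D ω| := by rw [hD]; ring_nf
        _ ≤ |Z n ω - Z 0 ω| + |D ω| := abs_add_le _ _
        _ ≤ _ := add_le_add h1 h2
    refine ⟨hpart1, ?_⟩
    intro s hs
    set R := ∑ i ∈ Finset.Icc 1 n, c i with hR
    set K := Real.exp (s^2 * c (n+1)^2 / 8) with hKdef
    have hKpos : 0 < K := Real.exp_pos _
    set β : Ω → ℝ := fun ω => (Real.exp (s * B (n+1) ω) - Real.exp (s * A (n+1) ω))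
      / (B (n+1) ω - A (n+1) ω) with hβ
    set W : Ω → ℝ := fun ω => Real.exp (s * (Z n ω - Z 0 ω)) with hW
    have hWsm : StronglyMeasurable[ℱ n] W := by
      refine Real.continuous_exp.comp_stronglyMeasurable ?_
      exact ((hmart.stronglyAdapted n).sub
        ((hmart.stronglyAdapted 0).mono (ℱ.mono (Nat.zero_le n)))).const_mul s
    have hWbd : ∀ᵐ ω ∂μ, ‖W ω‖ ≤ Real.exp (s * R) := by
      filter_upwards [ihbd] with ω h1
      rw [hW, Real.norm_eq_abs, abs_of_pos (Real.exp_pos _), Real.exp_le_exp]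
      have : Z n ω - Z 0 ω ≤ R := le_trans (le_abs_self _) h1
      exact mul_le_mul_of_nonneg_left this hs
    have hβm : Measurable[ℱ n] β := by
      refine Measurable.div ?_ (hBmeas.sub hAmeas)
      exact (Real.measurable_exp.comp (hBmeas.const_mul s)).sub
        (Real.measurable_exp.comp (hAmeas.const_mul s))
    have hβbd : ∀ᵐ ω ∂μ, ‖β ω‖ ≤ s * Real.exp (s * c (n+1)) := by
      filter_upwards [hb, hA0, hB0] with ω ⟨h1, h2, h3⟩ hA hB
      simp only [Pi.zero_apply] at hA hB
      rcases eq_or_lt_of_le (le_trans hA hB : A (n+1) ω ≤ B (n+1) ω) with heq | hlt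
      · have : β ω = 0 := by rw [hβ]; simp [heq]
        rw [this, norm_zero]; positivity
      · have hBc : B (n+1) ω ≤ c (n+1) := by linarith
        have hβ0 : 0 ≤ β ω := by
          apply div_nonneg _ (by linarith)
          have := Real.exp_le_exp.2 (mul_le_mul_of_nonneg_left hlt.le hs)
          linarith
        have hnum : Real.exp (s * B (n+1) ω) - Real.exp (s * A (n+1) ω)
            ≤ s * (B (n+1) ω - A (n+1) ω) * Real.exp (s * B (n+1) ω) := by
          have h4 := Real.add_one_le_exp (s * A (n+1) ω - s * B (n+1) ω)
          have h5 := mul_le_mul_of_nonneg_right h4 (Real.exp_pos (s * B (n+1) ω)).le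
          rw [← Real.exp_add] at h5
          have h6 : s * A (n+1) ω - s * B (n+1) ω + s * B (n+1) ω = s * A (n+1) ω := by ring
          rw [h6] at h5
          nlinarith
        have hβle : β ω ≤ s * Real.exp (s * B (n+1) ω) := by
          rw [hβ, div_le_iff₀ (by linarith : (0:ℝ) < B (n+1) ω - A (n+1) ω)]
          nlinarith
        rw [Real.norm_eq_abs, abs_of_nonneg hβ0]
        refine hβle.trans ?_
        have := Real.exp_le_exp.2 (mul_le_mul_of_nonneg_left hBc hs)
        nlinarith
    set g : Ω → ℝ := fun ω => W ω * β ω with hg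
    have hgsm : StronglyMeasurable[ℱ n] g := hWsm.mul hβm.stronglyMeasurable
    set M := Real.exp (s * R) * (s * Real.exp (s * c (n+1))) with hM
    have hgbd : ∀ᵐ ω ∂μ, ‖g ω‖ ≤ M := by
      filter_upwards [hWbd, hβbd] with ω h1 h2
      rw [hg, hM, norm_mul]
      exact mul_le_mul h1 h2 (norm_nonneg _) (Real.exp_pos _).le
    have hgaesm : AEStronglyMeasurable g μ := (hgsm.mono (ℱ.le n)).aestronglyMeasurable
    have hgDint : Integrable (fun ω => g ω * D ω) μ := hDint.bdd_mul hgaesm hgbd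
    have hzero : ∫ ω, g ω * D ω ∂μ = 0 := by
      have hpull := condExp_stronglyMeasurable_mul_of_bound (ℱ.le n) hgsm hDint M hgbd
      have h1 : ∫ ω, g ω * D ω ∂μ = ∫ ω, (μ[g * D | ℱ n]) ω ∂μ :=
        (integral_condExp (ℱ.le n) (f := g * D)).symm
      rw [h1, integral_congr_ae hpull]
      have h2 : (fun ω => g ω * (μ[D | ℱ n]) ω) =ᵐ[μ] 0 := by
        filter_upwards [hcondD] with ω hω
        simp [hω]
      calc ∫ ω, (g * μ[D | ℱ n]) ω ∂μ = ∫ ω, g ω * (μ[D | ℱ n]) ω ∂μ := rfl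
        _ = ∫ ω, (0 : Ω → ℝ) ω ∂μ := integral_congr_ae h2
        _ = 0 := by simp
    -- integrability facts
    have hWaesm : AEStronglyMeasurable W μ := (hWsm.mono (ℱ.le n)).aestronglyMeasurable
    have hWint : Integrable W μ :=
      Integrable.mono' (integrable_const (Real.exp (s * R))) hWaesm hWbd
    have hWKint : Integrable (fun ω => W ω * K) μ := hWint.mul_const K
    have hint2 : Integrable (fun ω => W ω * K + g ω * D ω) μ := hWKint.add hgDint
    have hint1 : Integrable (fun ω => W ω * Real.exp (s * D ω)) μ := by
      refine Integrable.mono' (integrable_const (Real.exp (s * R) * Real.exp (s * c (n+1))))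
        (hWaesm.mul ?_) ?_
      · exact Real.continuous_exp.comp_aestronglyMeasurable (hDint.1.const_mul s)
      · filter_upwards [hWbd, hDb] with ω h1 h2
        rw [norm_mul]
        refine mul_le_mul h1 ?_ (norm_nonneg _) (Real.exp_pos _).le
        rw [Real.norm_eq_abs, abs_of_pos (Real.exp_pos _), Real.exp_le_exp]
        exact mul_le_mul_of_nonneg_left (le_trans (le_abs_self _) h2) hs
    -- pointwise bound
    have hptwise : ∀ᵐ ω ∂μ, W ω * Real.exp (s * D ω) ≤ W ω * K + g ω * D ω := by
      filter_upwards [hb, hA0, hB0] with ω ⟨h1, h2, h3⟩ hA hB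
      simp only [Pi.zero_apply] at hA hB
      have hexp := exp_affine_bound s (A (n+1) ω) (B (n+1) ω) (c (n+1)) (D ω)
        hs hA hB h1 h2 h3
      have hW0 : 0 ≤ W ω := (Real.exp_pos _).le
      have := mul_le_mul_of_nonneg_left hexp hW0
      calc W ω * Real.exp (s * D ω) ≤ W ω * (K + β ω * D ω) := this
        _ = W ω * K + g ω * D ω := by rw [hg]; ring
    -- main chain
    have hEq : (fun ω => Real.exp (s * (Z (n+1) ω - Z 0 ω)))
        = fun ω => W ω * Real.exp (s * D ω) := by
      funext ω
      rw [hW, hD, ← Real.exp_add]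
      congr 1; ring
    calc ∫ ω, Real.exp (s * (Z (n+1) ω - Z 0 ω)) ∂μ
        = ∫ ω, W ω * Real.exp (s * D ω) ∂μ := by rw [hEq]
      _ ≤ ∫ ω, (W ω * K + g ω * D ω) ∂μ := integral_mono_ae hint1 hint2 hptwise
      _ = (∫ ω, W ω ∂μ) * K + ∫ ω, g ω * D ω ∂μ := by
          rw [integral_add hWKint hgDint, integral_mul_const]
      _ = K * ∫ ω, W ω ∂μ := by rw [hzero]; ring
      _ ≤ K * Real.exp (s^2 * (∑ i ∈ Finset.Icc 1 n, c i ^ 2) / 8) :=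
          mul_le_mul_of_nonneg_left (ihmgf s hs) hKpos.le
      _ = Real.exp (s^2 * (∑ i ∈ Finset.Icc 1 (n+1), c i ^ 2) / 8) := by
          rw [hKdef, ← Real.exp_add, Finset.sum_Icc_succ_top (Nat.le_add_left 1 n)]
          congr 1; ring


/-- Hoeffding–Azuma inequality with predictable bounds:
if (Z_k) is a martingale whose increments satisfy A_k ≤ Z_k − Z_{k−1} ≤ B_k a.s. with
A_k, B_k predictable and B_k − A_k ≤ c_k, then
ℙ[Z_t − Z₀ ≥ ε] ≤ exp(−2ε²/∑_{i=1}^t c_i²). -/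
theorem azuma_hoeffding_predictable
    {Ω : Type*} {m0 : MeasurableSpace Ω} (μ : Measure Ω) [IsProbabilityMeasure μ]
    (ℱ : Filtration ℕ m0) (Z A B : ℕ → Ω → ℝ) (c : ℕ → ℝ)
    (hmart : Martingale Z ℱ μ)
    (hpred : ∀ k : ℕ, 1 ≤ k →
      Measurable[ℱ (k - 1)] (A k) ∧ Measurable[ℱ (k - 1)] (B k))
    (hbdd : ∀ k : ℕ, 1 ≤ k → ∀ᵐ ω ∂μ,
      A k ω ≤ Z k ω - Z (k - 1) ω ∧ Z k ω - Z (k - 1) ω ≤ B k ω ∧ B k ω - A k ω ≤ c k)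
    (t : ℕ) (ε : ℝ) (hε : 0 < ε) :
    (μ {ω | ε ≤ Z t ω - Z 0 ω}).toReal ≤
      Real.exp (-2 * ε ^ 2 / ∑ i ∈ Finset.Icc 1 t, c i ^ 2) := by
  obtain ⟨hbd_t, hmgf_t⟩ := azuma_mgf_induction μ ℱ Z A B c hmart hpred hbdd t
  set S := ∑ i ∈ Finset.Icc 1 t, c i ^ 2 with hS
  have hS0 : 0 ≤ S := Finset.sum_nonneg fun i _ => sq_nonneg _
  rcases eq_or_lt_of_le hS0 with heq | hpos
  · rw [← heq, div_zero, Real.exp_zero]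
    calc (μ {ω | ε ≤ Z t ω - Z 0 ω}).toReal ≤ (1 : ENNReal).toReal :=
        ENNReal.toReal_mono (by simp) prob_le_one
      _ = 1 := by simp
  · set s : ℝ := 4 * ε / S with hs_def
    have hs : 0 ≤ s := by positivity
    set X : Ω → ℝ := fun ω => Z t ω - Z 0 ω with hX
    have hXaesm : AEStronglyMeasurable X μ :=
      (hmart.integrable t).1.sub (hmart.integrable 0).1
    have h_int : Integrable (fun ω => Real.exp (s * X ω)) μ := by
      refine Integrable.mono' (integrable_const (Real.exp (s * ∑ i ∈ Finset.Icc 1 t, c i)))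
        (Real.continuous_exp.comp_aestronglyMeasurable (hXaesm.const_mul s)) ?_
      filter_upwards [hbd_t] with ω h1
      rw [Real.norm_eq_abs, abs_of_pos (Real.exp_pos _), Real.exp_le_exp]
      exact mul_le_mul_of_nonneg_left (le_trans (le_abs_self _) h1) hs
    have hcher := ProbabilityTheory.measure_ge_le_exp_mul_mgf (X := X) (μ := μ) ε hs h_int
    have hmgf : ProbabilityTheory.mgf X μ s ≤ Real.exp (s ^ 2 * S / 8) := hmgf_t s hs
    calc (μ {ω | ε ≤ Z t ω - Z 0 ω}).toReal
        = (μ {ω | ε ≤ X ω}).toReal := rfl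
      _ ≤ Real.exp (-s * ε) * ProbabilityTheory.mgf X μ s := hcher
      _ ≤ Real.exp (-s * ε) * Real.exp (s ^ 2 * S / 8) :=
          mul_le_mul_of_nonneg_left hmgf (Real.exp_pos _).le
      _ = Real.exp (s ^ 2 * S / 8 + -s * ε) := by rw [← Real.exp_add]; ring_nf
      _ = Real.exp (-2 * ε ^ 2 / S) := by
          congr 1
          rw [hs_def]
          field_simp
          ring
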